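/- For every real t with 0 < t < 2, with Y_{1,s} := Ỹ_s/Y_s, S_{1,s} := S̃_s − S_s, R₁(t) = R₂(t) := t and R₃(t) := t(6−t)/(3(2−t)): (i) 1·R₁(t)·(Y_{1,1}(t)^{1/2} + 1) = S_{1,1}(t)·(Y_{1,1}(t)^{1/2} − 1); (ii) 2·R₂(t)·(Y_{1,2}(t) + 1) = S_{1,2}(t)·(Y_{1,2}(t) − 1); (iii) 3·R₃(t)·(Y_{1,3}(t)^{3/2} + 1) = S_{1,3}(t)·(Y_{1,3}(t)^{3/2} − 1). (Real powers of positive reals; these are the instances s = 1, 2, 3 of s·R_s·(Y_{1,s}^{s/2}+1) = S_{1,s}·(Y_{1,s}^{s/2}−1).) -/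

import Mathlib

/-! Göttsche–Kool universal functions of a real variable `t`, with all square
roots the nonnegative real square roots.  The `t`-suffixed versions
(`gkYt`, `gkZt`, `gkSt`) are the sign-flipped functions obtained by
replacing `√t` with `−√t`. -/

noncomputable def gkY1 (t : ℝ) : ℝ := (1 + t) + Real.sqrt t * Real.sqrt (1 + 3*t/4)
noncomputable def gkYt1 (t : ℝ) : ℝ := (1 + t) - Real.sqrt t * Real.sqrt (1 + 3*t/4)
noncomputable def gkY2 (t : ℝ) : ℝ := Real.sqrt t + Real.sqrt (1 + t)
noncomputable def gkYt2 (t : ℝ) : ℝ := -Real.sqrt t + Real.sqrt (1 + t)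
noncomputable def gkY3 (t : ℝ) : ℝ := 1 + Real.sqrt t * Real.sqrt (1 - t/4)
noncomputable def gkYt3 (t : ℝ) : ℝ := 1 - Real.sqrt t * Real.sqrt (1 - t/4)
noncomputable def gkZ1 (t : ℝ) : ℝ :=
  (1 + 3*t/4 - (1/2) * Real.sqrt t * Real.sqrt (1 + 3*t/4)) / (1 + t/2)
noncomputable def gkZt1 (t : ℝ) : ℝ :=
  (1 + 3*t/4 + (1/2) * Real.sqrt t * Real.sqrt (1 + 3*t/4)) / (1 + t/2)
noncomputable def gkZ2 (t : ℝ) : ℝ := 1 + t - Real.sqrt t * Real.sqrt (1 + t)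
noncomputable def gkZt2 (t : ℝ) : ℝ := 1 + t + Real.sqrt t * Real.sqrt (1 + t)
noncomputable def gkZ3 (t : ℝ) : ℝ :=
  (1 + t/2) * ((1 - t/4)*(1 + t/2)
    - (3/2) * Real.sqrt t * Real.sqrt (1 - t/4) * (1 - t/6)) / (1 - t/2)^3
noncomputable def gkZt3 (t : ℝ) : ℝ :=
  (1 + t/2) * ((1 - t/4)*(1 + t/2)
    + (3/2) * Real.sqrt t * Real.sqrt (1 - t/4) * (1 - t/6)) / (1 - t/2)^3
noncomputable def gkS1 (t : ℝ) : ℝ := -t/2 + Real.sqrt t * Real.sqrt (1 + 3*t/4)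
noncomputable def gkSt1 (t : ℝ) : ℝ := -t/2 - Real.sqrt t * Real.sqrt (1 + 3*t/4)
noncomputable def gkS2 (t : ℝ) : ℝ := -t + Real.sqrt t * Real.sqrt (1 + t)
noncomputable def gkSt2 (t : ℝ) : ℝ := -t - Real.sqrt t * Real.sqrt (1 + t)
noncomputable def gkS3 (t : ℝ) : ℝ :=
  (-(3/2)*t*(1 - t/6) + Real.sqrt t * Real.sqrt (1 - t/4) * (1 + t/2)) / (1 - t/2)
noncomputable def gkSt3 (t : ℝ) : ℝ :=
  (-(3/2)*t*(1 - t/6) - Real.sqrt t * Real.sqrt (1 - t/4) * (1 + t/2)) / (1 - t/2)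
noncomputable def gkV2 (t : ℝ) : ℝ := (1 + t)^2
noncomputable def gkV3 (t : ℝ) : ℝ := (1 + t/2)^3 / (1 - t/2)
noncomputable def gkW1 (t : ℝ) : ℝ := (1 + t/2)⁻¹
noncomputable def gkW2 (t : ℝ) : ℝ := (Real.sqrt (1 + t))⁻¹
noncomputable def gkW3 (t : ℝ) : ℝ := 2 / (2 + t)
noncomputable def gkX1 (t : ℝ) : ℝ :=
  (1 + t/2) ^ (-(3:ℝ)/4) * (1 + 3*t/4) ^ (-(1:ℝ)/2)
noncomputable def gkX2 (t : ℝ) : ℝ := (1 + t) ^ (-(3:ℝ)/2)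
noncomputable def gkX3 (t : ℝ) : ℝ :=
  (1 - t/2) ^ ((3:ℝ)/4) * (1 - t/4) ^ (-(1:ℝ)/2) * (1 + t/2) ^ (-(4:ℝ))


private lemma sq_rpow_half {c : ℝ} (hc : 0 ≤ c) : (c^2 : ℝ) ^ ((1:ℝ)/2) = c := by
  rw [← Real.rpow_natCast c 2, ← Real.rpow_mul hc, show ((2:ℕ):ℝ) * (1/2) = ((1:ℕ):ℝ) by norm_num,
    Real.rpow_natCast, pow_one]

private lemma sq_rpow_threehalf {c : ℝ} (hc : 0 ≤ c) : (c^2 : ℝ) ^ ((3:ℝ)/2) = c^3 := by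
  rw [← Real.rpow_natCast c 2, ← Real.rpow_mul hc, show ((2:ℕ):ℝ) * (3/2) = ((3:ℕ):ℝ) by norm_num,
    Real.rpow_natCast]

/-- for `0 < t < 2`, with `Y_{1,s} = Ỹ_s/Y_s`,
`S_{1,s} = S̃_s − S_s`, `R₁ = R₂ = t` and `R₃(t) = t(6−t)/(3(2−t))`, the
blowup-equation identity
`s·R_s·(Y_{1,s}^{s/2} + 1) = S_{1,s}·(Y_{1,s}^{s/2} − 1)` holds for
`s = 1, 2, 3` (real powers of positive reals). -/
theorem stmt_17 (t : ℝ) (ht0 : 0 < t) (ht2 : t < 2) :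
    1*t*((gkYt1 t / gkY1 t) ^ ((1:ℝ)/2) + 1)
      = (gkSt1 t - gkS1 t) * ((gkYt1 t / gkY1 t) ^ ((1:ℝ)/2) - 1) ∧
    2*t*((gkYt2 t / gkY2 t) + 1)
      = (gkSt2 t - gkS2 t) * ((gkYt2 t / gkY2 t) - 1) ∧
    3*(t*(6 - t)/(3*(2 - t)))*((gkYt3 t / gkY3 t) ^ ((3:ℝ)/2) + 1)
      = (gkSt3 t - gkS3 t) * ((gkYt3 t / gkY3 t) ^ ((3:ℝ)/2) - 1) := by
  have ht0' : (0:ℝ) ≤ t := le_of_lt ht0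
  set a := Real.sqrt t with ha
  have ha2 : a^2 = t := Real.sq_sqrt ht0'
  have hapos : 0 < a := Real.sqrt_pos.mpr ht0
  refine ⟨?_, ?_, ?_⟩
  · set b := Real.sqrt (1 + 3*t/4) with hb
    have hb2 : b^2 = 1 + 3*t/4 := Real.sq_sqrt (by linarith)
    have hbpos : 0 < b := Real.sqrt_pos.mpr (by linarith)
    have habpos : 0 < a*b := mul_pos hapos hbpos
    have hprod : (1 + t - a*b) * (1 + t + a*b) = (1 + t/2)^2 := by
      linear_combination (-(1+3*t/4))*ha2 - a^2*hb2
    have hden : (0:ℝ) < 1 + t/2 := by linarith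
    have hYpos : (0:ℝ) < 1 + t + a*b := by linarith
    have h2 : (0:ℝ) < 1 + t - a*b := by nlinarith [sq_nonneg (1 + t/2)]
    have hcnn : (0:ℝ) ≤ (1 + t - a*b) / (1 + t/2) := by positivity
    have hX : gkYt1 t / gkY1 t = ((1 + t - a*b) / (1 + t/2))^2 := by
      unfold gkYt1 gkY1
      rw [← ha, ← hb, div_pow, div_eq_div_iff (ne_of_gt hYpos) (by positivity)]
      linear_combination (-(1+t-a*b))*hprod
    rw [hX, sq_rpow_half hcnn]
    unfold gkS1 gkSt1; rw [← ha, ← hb]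
    field_simp
    linear_combination (-8*b^2)*ha2 + (-8*t)*hb2
  · set c := Real.sqrt (1 + t) with hc
    have hc2 : c^2 = 1 + t := Real.sq_sqrt (by linarith)
    have hcpos : 0 < c := Real.sqrt_pos.mpr (by linarith)
    unfold gkY2 gkYt2 gkS2 gkSt2
    rw [← ha, ← hc]
    have hne : a + c ≠ 0 := by positivity
    field_simp
    linear_combination (-4*c)*ha2
  · set b := Real.sqrt (1 - t/4) with hb
    have hb2 : b^2 = 1 - t/4 := Real.sq_sqrt (by linarith)
    have hbpos : 0 < b := Real.sqrt_pos.mpr (by linarith)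
    have hd : (0:ℝ) < 1 - t/2 := by linarith
    have hprod : (1 - a*b) * (1 + a*b) = (1 - t/2)^2 := by
      linear_combination (-(1-t/4))*ha2 - a^2*hb2
    have h1 : (0:ℝ) < 1 + a*b := by positivity
    have h2 : (0:ℝ) < 1 - a*b := by nlinarith [sq_nonneg (1 - t/2)]
    have hcnn : (0:ℝ) ≤ (1 - a*b) / (1 - t/2) := by positivity
    have hX : gkYt3 t / gkY3 t = ((1 - a*b) / (1 - t/2))^2 := by
      unfold gkYt3 gkY3
      rw [← ha, ← hb, div_pow, div_eq_div_iff (ne_of_gt h1) (by positivity)]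
      linear_combination (-(1-a*b))*hprod
    rw [hX, sq_rpow_threehalf hcnn]
    unfold gkS3 gkSt3; rw [← ha, ← hb]
    have hdne : (1 - t/2) ≠ 0 := ne_of_gt hd
    have h2t : (2 - t) ≠ 0 := by linarith
    field_simp
    linear_combination (((-192)*(a*b)^2 + (-96)*t*(a*b)^2 + 48*t^2*(a*b) + 576*(a*b) + 384*t + (-192)*t^2 + (-576) + 24*t^3)*b^2)*ha2 + (((-192)*(a*b)^2 + (-96)*t*(a*b)^2 + 48*t^2*(a*b) + 576*(a*b) + 384*t + (-192)*t^2 + (-576) + 24*t^3)*t)*hb2
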